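/- Let k ≥ 3 and 0 < ε ≤ (k-1)/2 be integers and let G be a vgr(n, k, 5, k(k-1)²/2 − ε)-graph. Let u be a vertex of G, let v be a vertex at distance exactly 3 from u whose unique neighbor in N_2(u) is v', and define V_{C''} = N_2(v) ∖ (N(u) ∪ N_2(u) ∪ N(v')). Then for every neighbor v_i of v with v_i ≠ v', we have |N(v_i) ∩ V_{C''}| ≥ k − 2. -/

import Mathlib

open SimpleGraph

/-- The set of vertices at distance exactly 2 from `v` in `G` (denoted `N₂(v)`). -/
def distTwoSet {V : Type*} (G : SimpleGraph V) (v : V) : Set V := {w | G.dist v w = 2}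

/-- The set of edges of `G` with one endpoint in `A` and the other endpoint in `B`,
denoted `E(A, B)`. -/
def edgesBetween {V : Type*} (G : SimpleGraph V) (A B : Set V) : Set (Sym2 V) :=
  {e | e ∈ G.edgeSet ∧ ∃ a ∈ A, ∃ b ∈ B, e = s(a, b)}

/-- Twice the number of cycles of length `g` through the vertex `v`: we count the closed
walks based at `v` that are cycles of length `g`; every (undirected) cycle of length `g`
containing `v` corresponds to exactly two such walks (its two orientations). -/
noncomputable def doubleCycleCountAt {V : Type*} (G : SimpleGraph V) (g : ℕ) (v : V) : ℕ :=
  {p : G.Walk v v | p.IsCycle ∧ p.length = g}.ncard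

/-- `G` is a `vgr(n, k, g, lam)`-graph: a `k`-regular graph of girth `g` on `n` vertices
in which every vertex lies on exactly `lam` cycles of length `g` (equivalently, the number
of closed cycle-walks of length `g` based at each vertex is `2 * lam`). -/
def IsVGR {V : Type*} [Fintype V] (G : SimpleGraph V) [DecidableRel G.Adj]
    (n k g lam : ℕ) : Prop :=
  Fintype.card V = n ∧ (∀ v : V, G.degree v = k) ∧ G.girth = (g : ℕ∞) ∧
    ∀ v : V, doubleCycleCountAt G g v = 2 * lam

namespace VGRAux

open Finset

variable {V : Type*} {G : SimpleGraph V}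

/-- All cycles have length at least 5. -/
def Girth5 (G : SimpleGraph V) : Prop := ∀ ⦃a : V⦄ (w : G.Walk a a), w.IsCycle → 5 ≤ w.length

lemma noC3 (hg : Girth5 G) {a b c : V} (h1 : G.Adj a b) (h2 : G.Adj b c)
    (h3 : G.Adj c a) : False := by
  have hab := h1.ne
  have hbc := h2.ne
  have hca := h3.ne
  have hcyc : (Walk.cons h1 (Walk.cons h2 (Walk.cons h3 Walk.nil))).IsCycle := by
    rw [Walk.isCycle_def]
    refine ⟨?_, by simp, ?_⟩
    · rw [Walk.isTrail_def]
      simp [Sym2.eq_iff]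
      tauto
    · simp [Walk.support_cons]
      tauto
  have := hg _ hcyc
  simp at this

lemma noC4 (hg : Girth5 G) {a b c d : V} (h1 : G.Adj a b) (h2 : G.Adj b c)
    (h3 : G.Adj c d) (h4 : G.Adj d a) (hac : a ≠ c) (hbd : b ≠ d) : False := by
  have hab := h1.ne
  have hbc := h2.ne
  have hcd := h3.ne
  have hda := h4.ne
  have hcyc : (Walk.cons h1 (Walk.cons h2 (Walk.cons h3 (Walk.cons h4 Walk.nil)))).IsCycle := by
    rw [Walk.isCycle_def]
    refine ⟨?_, by simp, ?_⟩
    · rw [Walk.isTrail_def]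
      simp [Sym2.eq_iff]
      tauto
    · simp [Walk.support_cons]
      tauto
  have := hg _ hcyc
  simp at this

/-- The common neighbor of two distinct vertices is unique (no 4-cycles). -/
lemma uniquePath2 (hg : Girth5 G) {x y b b' : V} (hxy : x ≠ y) (h1 : G.Adj x b)
    (h2 : G.Adj b y) (h1' : G.Adj x b') (h2' : G.Adj b' y) : b = b' := by
  by_contra hne
  exact noC4 hg h1 h2 h2'.symm h1'.symm hxy hne

lemma walk5_decomp {x : V} (p : G.Walk x x) (hp : p.length = 5) :
    ∃ (b c d e : V) (h1 : G.Adj x b) (h2 : G.Adj b c) (h3 : G.Adj c d) (h4 : G.Adj d e)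
      (h5 : G.Adj e x),
      p = Walk.cons h1 (Walk.cons h2 (Walk.cons h3 (Walk.cons h4 (Walk.cons h5 Walk.nil)))) := by
  cases p with
  | nil => simp at hp
  | cons h1 p =>
    cases p with
    | nil => simp at hp
    | cons h2 p =>
      cases p with
      | nil => simp at hp
      | cons h3 p =>
        cases p with
        | nil => simp at hp
        | cons h4 p =>
          cases p with
          | nil => simp at hp
          | cons h5 p =>
            cases p with
            | nil => exact ⟨_, _, _, _, h1, h2, h3, h4, h5, rfl⟩
            | cons h6 p => simp [Walk.length_cons] at hp

/-- Quadruples `(b, p, q, c)` describing a 5-cycle `z-b-p-q-c-z` through `z`. -/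
def QP (G : SimpleGraph V) (z : V) (q : V × V × V × V) : Prop :=
  G.Adj z q.1 ∧ G.Adj q.1 q.2.1 ∧ G.Adj q.2.1 q.2.2.1 ∧ G.Adj q.2.2.1 q.2.2.2 ∧
  G.Adj q.2.2.2 z ∧
  q.1 ≠ q.2.2.1 ∧ q.1 ≠ q.2.2.2 ∧ q.2.1 ≠ q.2.2.2 ∧ q.2.1 ≠ z ∧ q.2.2.1 ≠ z

lemma count5 [Fintype V] (z : V) :
    {p : G.Walk z z | p.IsCycle ∧ p.length = 5}.ncard = {q : V × V × V × V | QP G z q}.ncard := by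
  classical
  set W := {p : G.Walk z z | p.IsCycle ∧ p.length = 5} with hW
  let f : G.Walk z z → V × V × V × V :=
    fun p => (p.getVert 1, p.getVert 2, p.getVert 3, p.getVert 4)
  have himg : f '' W = {q : V × V × V × V | QP G z q} := by
    ext q
    constructor
    · rintro ⟨p, ⟨hc, hl⟩, rfl⟩
      obtain ⟨b, c, d, e, h1, h2, h3, h4, h5, rfl⟩ := walk5_decomp p hl
      rw [Walk.isCycle_def] at hc
      obtain ⟨-, -, hnd⟩ := hc
      simp only [Walk.support_cons, Walk.support_nil, List.tail_cons, List.nodup_cons,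
        List.mem_cons, List.mem_singleton, List.not_mem_nil, or_false, List.nodup_nil] at hnd
      push_neg at hnd
      simp only [Set.mem_setOf_eq, QP, f, Walk.getVert_cons_succ, Walk.getVert_zero]
      refine ⟨h1, h2, h3, h4, h5, ?_, ?_, ?_, ?_, ?_⟩ <;> tauto
    · rintro ⟨ha1, ha2, ha3, ha4, ha5, n1, n2, n3, n4, n5⟩
      obtain ⟨b, c, d, e⟩ := q
      dsimp at ha1 ha2 ha3 ha4 ha5 n1 n2 n3 n4 n5
      have hab := ha1.ne
      have hbc := ha2.ne
      have hcd := ha3.ne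
      have hde := ha4.ne
      have hez := ha5.ne
      refine ⟨Walk.cons ha1 (Walk.cons ha2 (Walk.cons ha3 (Walk.cons ha4 (Walk.cons ha5
        Walk.nil)))), ⟨?_, by simp⟩, ?_⟩
      · rw [Walk.isCycle_def]
        refine ⟨?_, by simp, ?_⟩
        · rw [Walk.isTrail_def]
          simp [Sym2.eq_iff]
          tauto
        · simp [Walk.support_cons]
          tauto
      · simp [f, Walk.getVert_cons_succ, Walk.getVert_zero]
  have hinj : Set.InjOn f W := by
    rintro p ⟨hc, hl⟩ p' ⟨hc', hl'⟩ he
    obtain ⟨b, c, d, e, h1, h2, h3, h4, h5, rfl⟩ := walk5_decomp p hl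
    obtain ⟨b', c', d', e', h1', h2', h3', h4', h5', rfl⟩ := walk5_decomp p' hl'
    simp only [f, Walk.getVert_cons_succ, Walk.getVert_zero, Prod.mk.injEq] at he
    obtain ⟨rfl, rfl, rfl, rfl⟩ := he
    rfl
  rw [← himg, Set.ncard_image_of_injOn hinj]

variable {u w b : V}

lemma dist2_of (h1 : G.Adj u b) (h2 : G.Adj b w) (hne : u ≠ w) (hna : ¬ G.Adj u w) :
    G.dist u w = 2 := by
  have hle : G.dist u w ≤ 2 := by
    simpa using G.dist_le (Walk.cons h1 (Walk.cons h2 Walk.nil))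
  have hr : G.Reachable u w := ⟨Walk.cons h1 (Walk.cons h2 Walk.nil)⟩
  have h0 : G.dist u w ≠ 0 := fun h => hne (hr.dist_eq_zero_iff.mp h)
  have h1' : G.dist u w ≠ 1 := fun h => hna ((dist_eq_one_iff_adj (G := G)).mp h)
  omega

lemma dist2_decomp (h : G.dist u w = 2) : ∃ b, G.Adj u b ∧ G.Adj b w := by
  have hr : G.Reachable u w := by
    by_contra hnr
    rw [dist_eq_zero_of_not_reachable hnr] at h
    omega
  obtain ⟨p, hp⟩ := hr.exists_walk_length_eq_dist
  rw [h] at hp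
  cases p with
  | nil => simp at hp
  | cons h1 p =>
    cases p with
    | nil => simp at hp
    | cons h2 p =>
      cases p with
      | nil => exact ⟨_, h1, h2⟩
      | cons h3 p => simp [Walk.length_cons] at hp

lemma dist_le_two (h1 : G.Adj u b) (h2 : G.Adj b w) : G.dist u w ≤ 2 := by
  simpa using G.dist_le (Walk.cons h1 (Walk.cons h2 Walk.nil))

lemma ne_of_dist2 (h : G.dist u w = 2) : u ≠ w := by
  rintro rfl
  simp [SimpleGraph.dist_self] at h

lemma nadj_of_dist2 (h : G.dist u w = 2) : ¬ G.Adj u w := fun ha => by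
  rw [(dist_eq_one_iff_adj (G := G)).mpr ha] at h
  omega

/-- The (unique) middle vertex on a geodesic from `u` to a vertex at distance two. -/
noncomputable def aFun (G : SimpleGraph V) (u : V) : V → V := fun w =>
  if h : G.dist u w = 2 then (dist2_decomp h).choose else u

lemma aFun_adj (h : G.dist u w = 2) :
    G.Adj u (aFun G u w) ∧ G.Adj (aFun G u w) w := by
  rw [aFun, dif_pos h]
  exact (dist2_decomp h).choose_spec

lemma aFun_eq (hg : Girth5 G) (h : G.dist u w = 2) {b : V} (h1 : G.Adj u b)
    (h2 : G.Adj b w) : aFun G u w = b :=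
  uniquePath2 hg (ne_of_dist2 h) (aFun_adj h).1 (aFun_adj h).2 h1 h2

/-- Neighbors of neighbors of `u` distinct from `u` are at distance two from `u`. -/
lemma level2 (hg : Girth5 G) {y : V} (h1 : G.Adj u b) (h2 : G.Adj b y) (hne : y ≠ u) :
    G.dist u y = 2 := by
  have hna : ¬ G.Adj u y := fun h => noC3 hg h1 h2 h.symm
  exact dist2_of h1 h2 (Ne.symm hne) hna

end VGRAux

open VGRAux Finset in
set_option maxHeartbeats 1000000 in
theorem vgr_Li_lower_bound {V : Type*} [Fintype V] (G : SimpleGraph V) [DecidableRel G.Adj]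
    (k ε n : ℕ) (hk : 3 ≤ k) (hε : 0 < ε) (hεk : 2 * ε ≤ k - 1)
    (hG : IsVGR G n k 5 (k * (k - 1) ^ 2 / 2 - ε)) (u v v' : V)
    (hdist : G.dist u v = 3)
    (hv' : G.neighborSet v ∩ distTwoSet G u = {v'}) :
    ∀ vi : V, G.Adj v vi → vi ≠ v' →
      k - 2 ≤ (G.neighborSet vi
        ∩ (distTwoSet G v \ (G.neighborSet u ∪ distTwoSet G u ∪ G.neighborSet v'))).ncard := by
  classical
  intro vi hvvi hvine
  obtain ⟨-, hreg, hgirth, hcyc⟩ := hG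
  -- girth at least 5
  have hg : Girth5 G := by
    intro a w hw
    have hgn : G.girth = 5 := by exact_mod_cast hgirth
    have he : G.egirth = (5 : ℕ∞) := by
      have : G.egirth.toNat = 5 := hgn
      exact (ENat.toNat_eq_iff (by norm_num)).mp this
    have := le_egirth.mp he.ge a w hw
    exact_mod_cast this
  have hNcard : ∀ x : V, (G.neighborFinset x).card = k := fun x => by
    rw [card_neighborFinset_eq_degree]; exact hreg x
  -- basic facts about u, v, v', vi
  have hneq_uv : u ≠ v := by
    rintro rfl
    simp [SimpleGraph.dist_self] at hdist
  have hnadj_uv : ¬ G.Adj u v := fun h => by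
    have := (dist_eq_one_iff_adj (G := G)).mpr h
    omega
  have hv'uniq : ∀ y, G.Adj v y → G.dist u y = 2 → y = v' := by
    intro y h1 h2
    have := (Set.ext_iff.mp hv' y).mp ⟨h1, h2⟩
    exact this
  have hvv' : G.Adj v v' := ((Set.ext_iff.mp hv' v').mpr rfl).1
  have hv'd : G.dist u v' = 2 := ((Set.ext_iff.mp hv' v').mpr rfl).2
  have hnadj_u_vi : ¬ G.Adj u vi := fun h => by
    have : G.dist u v ≤ 2 := dist_le_two h hvvi.symm
    omega
  have hvi_ne_u : vi ≠ u := by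
    rintro rfl
    exact hnadj_uv hvvi.symm
  have hvi_d : G.dist u vi ≠ 2 := fun h => hvine (hv'uniq vi hvvi h)
  have hux : ∀ x : V, G.Adj u x → G.Adj x vi → False := by
    intro x h1 h2
    have hle := dist_le_two h1 h2
    have hr : G.Reachable u vi := ⟨Walk.cons h1 (Walk.cons h2 Walk.nil)⟩
    have h0 : G.dist u vi ≠ 0 := fun h => hvi_ne_u (hr.dist_eq_zero_iff.mp h).symm
    have h1' : G.dist u vi ≠ 1 := fun h => hnadj_u_vi ((dist_eq_one_iff_adj (G := G)).mp h)
    omega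
  have hvd : G.dist u v ≠ 2 := by omega
  -- the second neighborhood of u as a finset
  set Sf : Finset V := univ.filter (fun w => G.dist u w = 2) with hSfdef
  have hSfmem : ∀ w : V, w ∈ Sf ↔ G.dist u w = 2 := by
    intro w; simp [hSfdef]
  set aF : V → V := aFun G u with haFdef
  have haF : ∀ w, G.dist u w = 2 → G.Adj u (aF w) ∧ G.Adj (aF w) w := fun w h => aFun_adj h
  have haFeq : ∀ w, G.dist u w = 2 → ∀ b, G.Adj u b → G.Adj b w → aF w = b :=
    fun w h b h1 h2 => aFun_eq hg h h1 h2
  set a : V := aF v' with hadef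
  have ha_adj : G.Adj u a ∧ G.Adj a v' := haF v' hv'd
  -- |Sf| = k(k-1)
  have hSfcard : Sf.card = k * (k - 1) := by
    have hfib : ∀ w ∈ Sf, aF w ∈ G.neighborFinset u := by
      intro w hw
      rw [mem_neighborFinset]
      exact (haF w ((hSfmem w).mp hw)).1
    rw [Finset.card_eq_sum_card_fiberwise hfib]
    have hfi : ∀ b ∈ G.neighborFinset u,
        (Sf.filter (fun w => aF w = b)) = (G.neighborFinset b).erase u := by
      intro b hb
      rw [mem_neighborFinset] at hb
      ext y
      simp only [Finset.mem_filter, Finset.mem_erase, mem_neighborFinset, hSfmem]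
      constructor
      · rintro ⟨hy, rfl⟩
        exact ⟨Ne.symm (ne_of_dist2 hy), (haF y hy).2⟩
      · rintro ⟨hyu, hby⟩
        have hy2 : G.dist u y = 2 := level2 hg hb hby hyu
        exact ⟨hy2, haFeq y hy2 b hb hby⟩
    rw [Finset.sum_congr rfl fun b hb => by rw [hfi b hb]]
    have : ∀ b ∈ G.neighborFinset u, ((G.neighborFinset b).erase u).card = k - 1 := by
      intro b hb
      rw [mem_neighborFinset] at hb
      rw [Finset.card_erase_of_mem (by rw [mem_neighborFinset]; exact hb.symm), hNcard]
    rw [Finset.sum_congr rfl this, Finset.sum_const, hNcard, smul_eq_mul]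
  -- cycle count through a vertex, as quadruple count
  have hTz : ∀ z : V, (univ.filter (QP G z)).card + 2 * ε = k * (k - 1) ^ 2 := by
    intro z
    have h1 : doubleCycleCountAt G 5 z = 2 * (k * (k - 1) ^ 2 / 2 - ε) := hcyc z
    have h2 : doubleCycleCountAt G 5 z = (univ.filter (QP G z)).card := by
      have : doubleCycleCountAt G 5 z
          = {q : V × V × V × V | QP G z q}.ncard := count5 z
      rw [this]
      have : {q : V × V × V × V | QP G z q} = ↑(univ.filter (QP G z)) := by
        ext q; simp
      rw [this, Set.ncard_coe_finset]
    have heven : 2 ∣ k * (k - 1) ^ 2 := by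
      have h3 : Even ((k - 1) * k) := by
        have := Nat.even_mul_succ_self (k - 1)
        have h4 : k - 1 + 1 = k := by omega
        rwa [h4] at this
      obtain ⟨m, hm⟩ := h3
      exact ⟨m * (k - 1), by rw [sq]; rw [show k * ((k-1) * (k-1)) = ((k-1) * k) * (k-1) by ring, hm]; ring⟩
    have hle : 2 * ε ≤ k * (k - 1) ^ 2 := by
      calc 2 * ε ≤ k - 1 := hεk
        _ ≤ k * (k - 1) ^ 2 := by nlinarith
    omega
  -- There is a unique common neighbor, as a general principle:
  have hUN : ∀ {x y b b' : V}, x ≠ y → G.Adj x b → G.Adj b y → G.Adj x b' → G.Adj b' y →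
      b = b' := fun hxy h1 h2 h1' h2' => uniquePath2 hg hxy h1 h2 h1' h2'
  -- main finsets at vi
  set Nvi : Finset V := G.neighborFinset vi with hNvidef
  set W : Finset V := Nvi ∩ Sf with hWdef
  set X : Finset V := Nvi \ insert v W with hXdef
  have hWmem : ∀ w, w ∈ W ↔ G.Adj vi w ∧ G.dist u w = 2 := by
    intro w; simp [hWdef, hNvidef, hSfmem, mem_neighborFinset]
  have hXmem : ∀ x, x ∈ X ↔ G.Adj vi x ∧ x ≠ v ∧ G.dist u x ≠ 2 := by
    intro x
    simp only [hXdef, Finset.mem_sdiff, Finset.mem_insert, hWmem, hNvidef, mem_neighborFinset]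
    tauto
  have hv_mem_Nvi : v ∈ Nvi := by rw [hNvidef, mem_neighborFinset]; exact hvvi.symm
  have hv_not_W : v ∉ W := fun h => hvd ((hWmem v).mp h).2
  set t : ℕ := W.card with htdef
  -- cardinalities
  have hNvicard : Nvi.card = k := hNcard vi
  have hXcard : X.card + (t + 1) = k := by
    have hsub : insert v W ⊆ Nvi := by
      intro y hy
      rcases Finset.mem_insert.mp hy with rfl | hy
      · exact hv_mem_Nvi
      · exact Finset.mem_of_mem_inter_left (hWdef ▸ hy)
    have h1 : (insert v W).card = t + 1 := by
      rw [Finset.card_insert_of_notMem hv_not_W]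
    have h2 := Finset.card_sdiff_of_subset hsub
    have h3 := Finset.card_le_card hsub
    rw [hXdef]
    omega
  -- m(x): number of S-neighbors
  set m : V → ℕ := fun x => ((G.neighborFinset x) ∩ Sf).card with hmdef
  set M : ℕ := ∑ x ∈ X, m x with hMdef
  ---------------------------------------------------------------------------
  -- PART B : counting at u : 1 + t + M ≤ 2ε
  ---------------------------------------------------------------------------
  have hB : 1 + t + M ≤ 2 * ε := by
    set SS : Finset (V × V) := (Sf ×ˢ Sf).filter (fun pq => G.Adj pq.1 pq.2) with hSSdef
    set Rf : Finset V := univ.filter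
      (fun y => y ≠ u ∧ ¬ G.Adj u y ∧ G.dist u y ≠ 2) with hRfdef
    have hRfmem : ∀ y, y ∈ Rf ↔ y ≠ u ∧ ¬ G.Adj u y ∧ G.dist u y ≠ 2 := by
      intro y; simp [hRfdef]
    set SR : Finset (V × V) := (Sf ×ˢ Rf).filter (fun pq => G.Adj pq.1 pq.2) with hSRdef
    -- T_u injects into SS
    have hTuSS : (univ.filter (QP G u)).card ≤ SS.card := by
      apply Finset.card_le_card_of_injOn (fun q => (q.2.1, q.2.2.1))
      · rintro ⟨b, p, q, c⟩ (hq : (b, p, q, c) ∈ univ.filter (QP G u))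
        simp only [Finset.mem_filter, Finset.mem_univ, true_and, QP] at hq
        obtain ⟨a1, a2, a3, a4, a5, n1, n2, n3, n4, n5⟩ := hq
        show (p, q) ∈ SS
        simp only [hSSdef, Finset.mem_filter, Finset.mem_product, hSfmem]
        exact ⟨⟨level2 hg a1 a2 n4, level2 hg a5.symm a4.symm n5⟩, a3⟩
      · rintro ⟨b, p, q, c⟩ hq ⟨b', p', q', c'⟩ hq' he
        simp only [Finset.mem_coe, Finset.mem_filter, Finset.mem_univ, true_and, QP] at hq hq'
        obtain ⟨a1, a2, a3, a4, a5, n1, n2, n3, n4, n5⟩ := hq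
        obtain ⟨a1', a2', a3', a4', a5', n1', n2', n3', n4', n5'⟩ := hq'
        simp only [Prod.mk.injEq] at he
        obtain ⟨rfl, rfl⟩ := he
        have hup : u ≠ p := Ne.symm n4
        have huq : u ≠ q := Ne.symm n5
        have hb : b = b' := hUN hup a1 a2 a1' a2'
        have hc : c = c' := hUN huq a5.symm a4.symm a5'.symm a4'.symm
        simp [hb, hc]
    -- SS fiberwise
    have hSSsum : SS.card = ∑ w ∈ Sf, ((G.neighborFinset w) ∩ Sf).card := by
      have hfib : ∀ pq ∈ SS, pq.1 ∈ Sf := by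
        rintro ⟨p, q⟩ h
        simp only [hSSdef, Finset.mem_filter, Finset.mem_product] at h
        exact h.1.1
      rw [Finset.card_eq_sum_card_fiberwise hfib]
      apply Finset.sum_congr rfl
      intro w hw
      have : SS.filter (fun pq => pq.1 = w)
          = ((G.neighborFinset w) ∩ Sf).image (fun y => (w, y)) := by
        ext ⟨p, q⟩
        simp only [hSSdef, Finset.mem_filter, Finset.mem_product, Finset.mem_image,
          Finset.mem_inter, mem_neighborFinset, Prod.mk.injEq]
        constructor
        · rintro ⟨⟨⟨h1, h2⟩, h3⟩, rfl⟩
          exact ⟨q, ⟨h3, h2⟩, rfl, rfl⟩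
        · rintro ⟨y, ⟨h1, h2⟩, rfl, rfl⟩
          exact ⟨⟨⟨hw, h2⟩, h1⟩, rfl⟩
      rw [this, Finset.card_image_of_injective _ (fun y y' h => by
        simpa using (Prod.mk.injEq w y w y').mp h)]
    -- SR fiberwise over first component
    have hSRsum : SR.card = ∑ w ∈ Sf, ((G.neighborFinset w) ∩ Rf).card := by
      have hfib : ∀ pq ∈ SR, pq.1 ∈ Sf := by
        rintro ⟨p, q⟩ h
        simp only [hSRdef, Finset.mem_filter, Finset.mem_product] at h
        exact h.1.1
      rw [Finset.card_eq_sum_card_fiberwise hfib]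
      apply Finset.sum_congr rfl
      intro w hw
      have : SR.filter (fun pq => pq.1 = w)
          = ((G.neighborFinset w) ∩ Rf).image (fun y => (w, y)) := by
        ext ⟨p, q⟩
        simp only [hSRdef, Finset.mem_filter, Finset.mem_product, Finset.mem_image,
          Finset.mem_inter, mem_neighborFinset, Prod.mk.injEq]
        constructor
        · rintro ⟨⟨⟨h1, h2⟩, h3⟩, rfl⟩
          exact ⟨q, ⟨h3, h2⟩, rfl, rfl⟩
        · rintro ⟨y, ⟨h1, h2⟩, rfl, rfl⟩
          exact ⟨⟨⟨hw, h2⟩, h1⟩, rfl⟩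
      rw [this, Finset.card_image_of_injective _ (fun y y' h => by
        simpa using (Prod.mk.injEq w y w y').mp h)]
    -- pointwise: 1 + |N(w)∩Sf| + |N(w)∩Rf| ≤ k
    have hpt : ∀ w ∈ Sf, 1 + (((G.neighborFinset w) ∩ Sf).card
        + ((G.neighborFinset w) ∩ Rf).card) ≤ k := by
      intro w hw
      have hw2 : G.dist u w = 2 := (hSfmem w).mp hw
      have hdisj : Disjoint ((G.neighborFinset w) ∩ Sf) ((G.neighborFinset w) ∩ Rf) := by
        rw [Finset.disjoint_left]
        intro y hy1 hy2
        have h1 := (Finset.mem_inter.mp hy1).2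
        have h2 := (Finset.mem_inter.mp hy2).2
        rw [hSfmem] at h1
        rw [hRfmem] at h2
        exact h2.2.2 h1
      have hnotmem : aF w ∉ ((G.neighborFinset w) ∩ Sf) ∪ ((G.neighborFinset w) ∩ Rf) := by
        rw [Finset.mem_union]
        rintro (h | h)
        · have h1 := (Finset.mem_inter.mp h).2
          rw [hSfmem] at h1
          exact nadj_of_dist2 h1 (haF w hw2).1
        · have h1 := (Finset.mem_inter.mp h).2
          rw [hRfmem] at h1
          exact h1.2.1 (haF w hw2).1
      have hsub : insert (aF w) (((G.neighborFinset w) ∩ Sf) ∪ ((G.neighborFinset w) ∩ Rf))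
          ⊆ G.neighborFinset w := by
        intro y hy
        rcases Finset.mem_insert.mp hy with rfl | hy
        · rw [mem_neighborFinset]
          exact (haF w hw2).2.symm
        · rcases Finset.mem_union.mp hy with h | h
          · exact (Finset.mem_inter.mp h).1
          · exact (Finset.mem_inter.mp h).1
      have := Finset.card_le_card hsub
      rw [Finset.card_insert_of_notMem hnotmem, Finset.card_union_of_disjoint hdisj,
        hNcard] at this
      omega
    -- sum the pointwise bound
    have hsumpt : Sf.card + (SS.card + SR.card) ≤ Sf.card * k := by
      have h1 := Finset.sum_le_sum hpt
      rw [Finset.sum_const, smul_eq_mul] at h1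
      have h2 : ∑ w ∈ Sf, (1 + (((G.neighborFinset w) ∩ Sf).card
          + ((G.neighborFinset w) ∩ Rf).card))
          = Sf.card + (SS.card + SR.card) := by
        rw [Finset.sum_add_distrib, Finset.sum_add_distrib, Finset.sum_const, smul_eq_mul,
          mul_one, hSSsum, hSRsum]
      omega
    -- lower bound on SR
    have hSRge : 1 + t + M ≤ SR.card := by
      set Yf : Finset V := insert v (insert vi X) with hYfdef
      have hvnotin : v ∉ insert vi X := by
        rw [Finset.mem_insert]
        rintro (rfl | h)
        · exact hvvi.ne rfl
        · exact ((hXmem v).mp h).2.1 rfl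
      have hvinotin : vi ∉ X := fun h => G.irrefl ((hXmem vi).mp h).1
      have hYR : ∀ y ∈ Yf, y ∈ Rf := by
        intro y hy
        rw [hYfdef] at hy
        rcases Finset.mem_insert.mp hy with rfl | hy
        · rw [hRfmem]
          exact ⟨Ne.symm hneq_uv, hnadj_uv, hvd⟩
        · rcases Finset.mem_insert.mp hy with rfl | hy
          · rw [hRfmem]
            exact ⟨hvi_ne_u, hnadj_u_vi, hvi_d⟩
          · obtain ⟨h1, h2, h3⟩ := (hXmem y).mp hy
            rw [hRfmem]
            refine ⟨?_, ?_, h3⟩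
            · rintro rfl
              exact hnadj_u_vi h1.symm
            · intro h
              exact hux y h h1.symm
      set SR' : Finset (V × V) := SR.filter (fun pq => pq.2 ∈ Yf) with hSR'def
      have hSR'card : SR'.card = ∑ y ∈ Yf, ((G.neighborFinset y) ∩ Sf).card := by
        have hfib : ∀ pq ∈ SR', pq.2 ∈ Yf := by
          rintro ⟨p, q⟩ h
          exact (Finset.mem_filter.mp h).2
        rw [Finset.card_eq_sum_card_fiberwise hfib]
        apply Finset.sum_congr rfl
        intro y hy
        have : SR'.filter (fun pq => pq.2 = y)
            = ((G.neighborFinset y) ∩ Sf).image (fun w => (w, y)) := by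
          ext ⟨p, q⟩
          simp only [hSR'def, hSRdef, Finset.mem_filter, Finset.mem_product, Finset.mem_image,
            Finset.mem_inter, mem_neighborFinset, Prod.mk.injEq]
          constructor
          · rintro ⟨⟨⟨⟨h1, h2⟩, h3⟩, h4⟩, rfl⟩
            exact ⟨p, ⟨h3.symm, h1⟩, rfl, rfl⟩
          · rintro ⟨w, ⟨h1, h2⟩, rfl, rfl⟩
            exact ⟨⟨⟨⟨h2, hYR y hy⟩, h1.symm⟩, hy⟩, rfl⟩
        rw [this, Finset.card_image_of_injective _ (fun w w' h => by
          simpa using (Prod.mk.injEq w y w' y).mp h)]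
      have hNvSf : (G.neighborFinset v) ∩ Sf = {v'} := by
        ext y
        simp only [Finset.mem_inter, mem_neighborFinset, hSfmem, Finset.mem_singleton]
        constructor
        · rintro ⟨h1, h2⟩
          exact hv'uniq y h1 h2
        · rintro rfl
          exact ⟨hvv', hv'd⟩
      have hNviSf : (G.neighborFinset vi) ∩ Sf = W := by rw [hWdef, hNvidef]
      have hsum' : ∑ y ∈ Yf, ((G.neighborFinset y) ∩ Sf).card = 1 + t + M := by
        rw [hYfdef, Finset.sum_insert hvnotin, Finset.sum_insert hvinotin,
          hNvSf, hNviSf, Finset.card_singleton, hMdef]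
        simp only [hmdef]
        ring
      calc 1 + t + M = SR'.card := by rw [hSR'card, hsum']
        _ ≤ SR.card := Finset.card_filter_le _ _
    -- combine
    have hTu := hTz u
    rw [hSfcard] at hsumpt
    have h2 : k * (k-1) * k = k * (k-1)^2 + k * (k-1) := by
      obtain ⟨j, rfl⟩ : ∃ j, k = j + 1 := ⟨k - 1, by omega⟩
      simp only [Nat.add_sub_cancel]
      ring
    linarith only [hsumpt, hTuSS, hSRge, hTu, h2]
  ---------------------------------------------------------------------------
  -- PART A : counting at vi (assuming t ≥ 2 we will derive the defect bound)
  ---------------------------------------------------------------------------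
  -- we prove the key claim : t ≤ 1
  have hKEY : t ≤ 1 := by
    by_contra hKEY
    push_neg at hKEY
    -- now t ≥ 2
    set TV : Finset (V × V × V × V) := univ.filter (QP G vi) with hTVdef
    set F : V × V × V × V → V × V := fun q => (q.1, q.2.2.2) with hFdef
    set PR : Finset (V × V) := (Nvi ×ˢ Nvi).filter (fun bc => ¬ (bc.1 = bc.2)) with hPRdef
    set fib : V × V → ℕ := fun bc => (TV.filter (fun q => F q = bc)).card with hfibdef
    -- facts about W-members
    have hWfacts : ∀ w ∈ W, G.Adj vi w ∧ G.dist u w = 2 ∧ G.Adj u (aF w) ∧ G.Adj (aF w) w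
        ∧ aF w ≠ vi := by
      intro w hw
      obtain ⟨h1, h2⟩ := (hWmem w).mp hw
      refine ⟨h1, h2, (haF w h2).1, (haF w h2).2, ?_⟩
      intro hh
      exact hnadj_u_vi (hh ▸ (haF w h2).1)
    -- fiber decomposition of TV
    have hTVsum : TV.card = ∑ bc ∈ PR, fib bc := by
      apply Finset.card_eq_sum_card_fiberwise
      rintro ⟨b, p, q, c⟩ (hq : (b, p, q, c) ∈ TV)
      simp only [hTVdef, Finset.mem_filter, Finset.mem_univ, true_and, QP] at hq
      obtain ⟨a1, a2, a3, a4, a5, n1, n2, n3, n4, n5⟩ := hq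
      show (b, c) ∈ PR
      simp only [hPRdef, Finset.mem_filter, Finset.mem_product, hNvidef, mem_neighborFinset,
        hFdef]
      exact ⟨⟨a1, a5.symm⟩, n2⟩
    -- generic fiber bound: fib bc + 1 ≤ k whenever bc.1 ∈ Nvi
    have hfib1 : ∀ b c : V, G.Adj vi b → fib (b, c) + 1 ≤ k := by
      intro b c hb
      have hle : fib (b, c) ≤ ((G.neighborFinset b).erase vi).card := by
        apply Finset.card_le_card_of_injOn (fun q => q.2.1)
        · rintro ⟨b0, p, q, c0⟩ (hq : (b0, p, q, c0) ∈ TV.filter (fun q => F q = (b, c)))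
          simp only [hTVdef, hFdef, Finset.mem_filter, Finset.mem_univ, true_and, QP,
            Prod.mk.injEq] at hq
          obtain ⟨⟨a1, a2, a3, a4, a5, n1, n2, n3, n4, n5⟩, rfl, rfl⟩ := hq
          show p ∈ (G.neighborFinset b0).erase vi
          simp only [Finset.mem_erase, mem_neighborFinset]
          exact ⟨n4, a2⟩
        · rintro ⟨b0, p, q, c0⟩ hq ⟨b0', p', q', c0'⟩ hq' he
          simp only [Finset.mem_coe, hTVdef, hFdef, Finset.mem_filter, Finset.mem_univ,
            true_and, QP, Prod.mk.injEq] at hq hq'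
          obtain ⟨⟨a1, a2, a3, a4, a5, n1, n2, n3, n4, n5⟩, rfl, rfl⟩ := hq
          obtain ⟨⟨a1', a2', a3', a4', a5', n1', n2', n3', n4', n5'⟩, rfl, rfl⟩ := hq'
          simp only at he
          subst he
          have : q = q' := hUN n3 a3 a4 a3' a4'
          simp [this]
      have : ((G.neighborFinset b).erase vi).card = k - 1 := by
        rw [Finset.card_erase_of_mem (by rw [mem_neighborFinset]; exact hb.symm), hNcard]
      omega
    -- defective fiber bounds
    -- (v, w) with aF w ≠ a
    have hfib_vw : ∀ w ∈ W, aF w ≠ a → fib (v, w) + 2 ≤ k := by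
      intro w hw hwa
      obtain ⟨hadjviw, hw2, hua, haw, hafvi⟩ := hWfacts w hw
      have hle : fib (v, w) ≤ (((G.neighborFinset w).erase vi).erase (aF w)).card := by
        apply Finset.card_le_card_of_injOn (fun q => q.2.2.1)
        · rintro ⟨b0, p, q, c0⟩ (hq : (b0, p, q, c0) ∈ TV.filter (fun q => F q = (v, w)))
          simp only [hTVdef, hFdef, Finset.mem_filter, Finset.mem_univ, true_and, QP,
            Prod.mk.injEq] at hq
          obtain ⟨⟨a1, a2, a3, a4, a5, n1, n2, n3, n4, n5⟩, rfl, rfl⟩ := hq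
          show q ∈ ((G.neighborFinset c0).erase vi).erase (aF c0)
          simp only [Finset.mem_erase, mem_neighborFinset]
          refine ⟨?_, n5, a4.symm⟩
          -- q ≠ aF w
          rintro rfl
          -- p is adjacent to aF w and to v
          have hpu : p ≠ u := by
            rintro rfl
            exact hnadj_uv a2.symm
          have hp2 : G.dist u p = 2 := level2 hg hua a3.symm hpu
          have hpv' : p = v' := hv'uniq p a2 hp2
          subst hpv'
          exact hwa (hUN (ne_of_dist2 hv'd) hua a3.symm ha_adj.1 ha_adj.2)
        · rintro ⟨b0, p, q, c0⟩ hq ⟨b0', p', q', c0'⟩ hq' he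
          simp only [Finset.mem_coe, hTVdef, hFdef, Finset.mem_filter, Finset.mem_univ,
            true_and, QP, Prod.mk.injEq] at hq hq'
          obtain ⟨⟨a1, a2, a3, a4, a5, n1, n2, n3, n4, n5⟩, rfl, rfl⟩ := hq
          obtain ⟨⟨a1', a2', a3', a4', a5', n1', n2', n3', n4', n5'⟩, rfl, rfl⟩ := hq'
          simp only at he
          subst he
          have : p = p' := hUN n1 a2 a3 a2' a3'
          simp [this]
      have h1 : aF w ∈ (G.neighborFinset w).erase vi := by
        simp only [Finset.mem_erase, mem_neighborFinset]
        exact ⟨hafvi, haw.symm⟩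
      have h2 : vi ∈ G.neighborFinset w := by
        rw [mem_neighborFinset]; exact hadjviw.symm
      rw [Finset.card_erase_of_mem h1, Finset.card_erase_of_mem h2, hNcard] at hle
      omega
    -- (w, v) with aF w ≠ a
    have hfib_wv : ∀ w ∈ W, aF w ≠ a → fib (w, v) + 2 ≤ k := by
      intro w hw hwa
      obtain ⟨hadjviw, hw2, hua, haw, hafvi⟩ := hWfacts w hw
      have hle : fib (w, v) ≤ (((G.neighborFinset w).erase vi).erase (aF w)).card := by
        apply Finset.card_le_card_of_injOn (fun q => q.2.1)
        · rintro ⟨b0, p, q, c0⟩ (hq : (b0, p, q, c0) ∈ TV.filter (fun q => F q = (w, v)))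
          simp only [hTVdef, hFdef, Finset.mem_filter, Finset.mem_univ, true_and, QP,
            Prod.mk.injEq] at hq
          obtain ⟨⟨a1, a2, a3, a4, a5, n1, n2, n3, n4, n5⟩, rfl, rfl⟩ := hq
          show p ∈ ((G.neighborFinset b0).erase vi).erase (aF b0)
          simp only [Finset.mem_erase, mem_neighborFinset]
          refine ⟨?_, n4, a2⟩
          rintro rfl
          have hqu : q ≠ u := by
            rintro rfl
            exact hnadj_uv a4
          have hq2 : G.dist u q = 2 := level2 hg hua a3 hqu
          have hqv' : q = v' := hv'uniq q a4.symm hq2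
          subst hqv'
          exact hwa (hUN (ne_of_dist2 hv'd) hua a3 ha_adj.1 ha_adj.2)
        · rintro ⟨b0, p, q, c0⟩ hq ⟨b0', p', q', c0'⟩ hq' he
          simp only [Finset.mem_coe, hTVdef, hFdef, Finset.mem_filter, Finset.mem_univ,
            true_and, QP, Prod.mk.injEq] at hq hq'
          obtain ⟨⟨a1, a2, a3, a4, a5, n1, n2, n3, n4, n5⟩, rfl, rfl⟩ := hq
          obtain ⟨⟨a1', a2', a3', a4', a5', n1', n2', n3', n4', n5'⟩, rfl, rfl⟩ := hq'
          simp only at he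
          subst he
          have : q = q' := hUN n3 a3 a4 a3' a4'
          simp [this]
      have h1 : aF w ∈ (G.neighborFinset w).erase vi := by
        simp only [Finset.mem_erase, mem_neighborFinset]
        exact ⟨hafvi, haw.symm⟩
      have h2 : vi ∈ G.neighborFinset w := by
        rw [mem_neighborFinset]; exact hadjviw.symm
      rw [Finset.card_erase_of_mem h1, Finset.card_erase_of_mem h2, hNcard] at hle
      omega
    -- Bad condition
    set P : V × V → Prop := fun wx =>
      ∀ s, G.Adj wx.2 s → G.dist u s = 2 → ¬ G.Adj (aF wx.1) s with hPdef
    -- (w, x) bad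
    have hfib_wx : ∀ w ∈ W, ∀ x ∈ X, P (w, x) → fib (w, x) + 2 ≤ k := by
      intro w hw x hx hbad
      obtain ⟨hadjviw, hw2, hua, haw, hafvi⟩ := hWfacts w hw
      obtain ⟨hadjvix, hxv, hxd⟩ := (hXmem x).mp hx
      have hle : fib (w, x) ≤ (((G.neighborFinset w).erase vi).erase (aF w)).card := by
        apply Finset.card_le_card_of_injOn (fun q => q.2.1)
        · rintro ⟨b0, p, q, c0⟩ (hq : (b0, p, q, c0) ∈ TV.filter (fun q => F q = (w, x)))
          simp only [hTVdef, hFdef, Finset.mem_filter, Finset.mem_univ, true_and, QP,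
            Prod.mk.injEq] at hq
          obtain ⟨⟨a1, a2, a3, a4, a5, n1, n2, n3, n4, n5⟩, rfl, rfl⟩ := hq
          show p ∈ ((G.neighborFinset b0).erase vi).erase (aF b0)
          simp only [Finset.mem_erase, mem_neighborFinset]
          refine ⟨?_, n4, a2⟩
          rintro rfl
          have hqu : q ≠ u := by
            rintro rfl
            exact hux _ a4 hadjvix.symm
          have hq2 : G.dist u q = 2 := level2 hg hua a3 hqu
          exact hbad q a4.symm hq2 a3
        · rintro ⟨b0, p, q, c0⟩ hq ⟨b0', p', q', c0'⟩ hq' he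
          simp only [Finset.mem_coe, hTVdef, hFdef, Finset.mem_filter, Finset.mem_univ,
            true_and, QP, Prod.mk.injEq] at hq hq'
          obtain ⟨⟨a1, a2, a3, a4, a5, n1, n2, n3, n4, n5⟩, rfl, rfl⟩ := hq
          obtain ⟨⟨a1', a2', a3', a4', a5', n1', n2', n3', n4', n5'⟩, rfl, rfl⟩ := hq'
          simp only at he
          subst he
          have : q = q' := hUN n3 a3 a4 a3' a4'
          simp [this]
      have h1 : aF w ∈ (G.neighborFinset w).erase vi := by
        simp only [Finset.mem_erase, mem_neighborFinset]
        exact ⟨hafvi, haw.symm⟩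
      have h2 : vi ∈ G.neighborFinset w := by
        rw [mem_neighborFinset]; exact hadjviw.symm
      rw [Finset.card_erase_of_mem h1, Finset.card_erase_of_mem h2, hNcard] at hle
      omega
    -- (x, w) bad
    have hfib_xw : ∀ w ∈ W, ∀ x ∈ X, P (w, x) → fib (x, w) + 2 ≤ k := by
      intro w hw x hx hbad
      obtain ⟨hadjviw, hw2, hua, haw, hafvi⟩ := hWfacts w hw
      obtain ⟨hadjvix, hxv, hxd⟩ := (hXmem x).mp hx
      have hle : fib (x, w) ≤ (((G.neighborFinset w).erase vi).erase (aF w)).card := by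
        apply Finset.card_le_card_of_injOn (fun q => q.2.2.1)
        · rintro ⟨b0, p, q, c0⟩ (hq : (b0, p, q, c0) ∈ TV.filter (fun q => F q = (x, w)))
          simp only [hTVdef, hFdef, Finset.mem_filter, Finset.mem_univ, true_and, QP,
            Prod.mk.injEq] at hq
          obtain ⟨⟨a1, a2, a3, a4, a5, n1, n2, n3, n4, n5⟩, rfl, rfl⟩ := hq
          show q ∈ ((G.neighborFinset c0).erase vi).erase (aF c0)
          simp only [Finset.mem_erase, mem_neighborFinset]
          refine ⟨?_, n5, a4.symm⟩
          rintro rfl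
          have hpu : p ≠ u := by
            rintro rfl
            exact hux _ a2.symm hadjvix.symm
          have hp2 : G.dist u p = 2 := level2 hg hua a3.symm hpu
          exact hbad p a2 hp2 a3.symm
        · rintro ⟨b0, p, q, c0⟩ hq ⟨b0', p', q', c0'⟩ hq' he
          simp only [Finset.mem_coe, hTVdef, hFdef, Finset.mem_filter, Finset.mem_univ,
            true_and, QP, Prod.mk.injEq] at hq hq'
          obtain ⟨⟨a1, a2, a3, a4, a5, n1, n2, n3, n4, n5⟩, rfl, rfl⟩ := hq
          obtain ⟨⟨a1', a2', a3', a4', a5', n1', n2', n3', n4', n5'⟩, rfl, rfl⟩ := hq'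
          simp only at he
          subst he
          have : p = p' := hUN n1 a2 a3 a2' a3'
          simp [this]
      have h1 : aF w ∈ (G.neighborFinset w).erase vi := by
        simp only [Finset.mem_erase, mem_neighborFinset]
        exact ⟨hafvi, haw.symm⟩
      have h2 : vi ∈ G.neighborFinset w := by
        rw [mem_neighborFinset]; exact hadjviw.symm
      rw [Finset.card_erase_of_mem h1, Finset.card_erase_of_mem h2, hNcard] at hle
      omega
    -- aF is injective on W
    have haFinj : ∀ w ∈ W, ∀ w' ∈ W, aF w = aF w' → w = w' := by
      intro w hw w' hw' he
      obtain ⟨h1, h2, h3, h4, h5⟩ := hWfacts w hw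
      obtain ⟨h1', h2', h3', h4', h5'⟩ := hWfacts w' hw'
      exact hUN h5 h4 h1.symm (he ▸ h4') h1'.symm
    -- Wa
    set Wa : Finset V := W.filter (fun w => aF w ≠ a) with hWadef
    have hWa : t ≤ Wa.card + 1 := by
      have hsplit := Finset.card_filter_add_card_filter_not
        (s := W) (p := fun w => aF w ≠ a)
      rw [← hWadef] at hsplit
      have hone : (W.filter (fun w => ¬ aF w ≠ a)).card ≤ 1 := by
        rw [Finset.card_le_one]
        intro w hw w' hw'
        simp only [Finset.mem_filter, not_not] at hw hw'
        obtain ⟨hwW, hwa⟩ := hw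
        obtain ⟨hw'W, hw'a⟩ := hw'
        exact haFinj w hwW w' hw'W (hwa.trans hw'a.symm)
      omega
    -- Bad
    set Bad : Finset (V × V) := (W ×ˢ X).filter P with hBaddef
    have hBadsum : Bad.card = ∑ x ∈ X, (Bad.filter (fun wx => wx.2 = x)).card := by
      apply Finset.card_eq_sum_card_fiberwise
      intro wx hwx
      exact (Finset.mem_product.mp (Finset.mem_filter.mp hwx).1).2
    have hBadfib : ∀ x ∈ X, t ≤ (Bad.filter (fun wx => wx.2 = x)).card + m x := by
      intro x hx
      have hWg : (W.filter (fun w => ¬ P (w, x))).card ≤ m x := by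
        apply Finset.card_le_card_of_injOn (fun w =>
          if h : ∃ s, G.Adj x s ∧ G.dist u s = 2 ∧ G.Adj (aF w) s then h.choose else u)
        · intro w (hw : w ∈ W.filter (fun w => ¬ P (w, x)))
          simp only [Finset.mem_filter, hPdef] at hw
          obtain ⟨hwW, hnp⟩ := hw
          push_neg at hnp
          obtain ⟨s, hs1, hs2, hs3⟩ := hnp
          have hex : ∃ s, G.Adj x s ∧ G.dist u s = 2 ∧ G.Adj (aF w) s := ⟨s, hs1, hs2, hs3⟩
          simp only [dif_pos hex, hmdef, Finset.mem_inter, mem_neighborFinset, hSfmem]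
          show hex.choose ∈ G.neighborFinset x ∩ Sf
          simp only [Finset.mem_inter, mem_neighborFinset, hSfmem]
          exact ⟨hex.choose_spec.1, hex.choose_spec.2.1⟩
        · intro w hw w' hw' he
          simp only [Finset.mem_coe, Finset.mem_filter, hPdef] at hw hw'
          obtain ⟨hwW, hnp⟩ := hw
          obtain ⟨hw'W, hnp'⟩ := hw'
          push_neg at hnp hnp'
          have hex : ∃ s, G.Adj x s ∧ G.dist u s = 2 ∧ G.Adj (aF w) s := hnp
          have hex' : ∃ s, G.Adj x s ∧ G.dist u s = 2 ∧ G.Adj (aF w') s := hnp'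
          simp only [] at he
          rw [dif_pos hex, dif_pos hex'] at he
          obtain ⟨hc1, hc2, hc3⟩ := hex.choose_spec
          obtain ⟨hc1', hc2', hc3'⟩ := hex'.choose_spec
          rw [he] at hc3
          have huaw := ((hWfacts w hwW).2.2.1)
          have huaw' := ((hWfacts w' hw'W).2.2.1)
          have : aF w = aF w' :=
            hUN (ne_of_dist2 hc2') huaw hc3 huaw' hc3'
          exact haFinj w hwW w' hw'W this
      have him : (W.filter (fun w => P (w, x))).card
          = (Bad.filter (fun wx => wx.2 = x)).card := by
        have : Bad.filter (fun wx => wx.2 = x)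
            = (W.filter (fun w => P (w, x))).image (fun w => (w, x)) := by
          ext ⟨w, y⟩
          simp only [hBaddef, Finset.mem_filter, Finset.mem_product, Finset.mem_image,
            Prod.mk.injEq]
          constructor
          · rintro ⟨⟨⟨hwW, hyX⟩, hp⟩, rfl⟩
            exact ⟨w, ⟨hwW, hp⟩, rfl, rfl⟩
          · rintro ⟨w', ⟨hw'W, hp⟩, rfl, rfl⟩
            exact ⟨⟨⟨hw'W, hx⟩, hp⟩, rfl⟩
        rw [this, Finset.card_image_of_injective _ (fun w w' h => by
          simpa using (Prod.mk.injEq w x w' x).mp h)]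
      have hsplit := Finset.card_filter_add_card_filter_not
        (s := W) (p := fun w => P (w, x))
      omega
    have hBadM : X.card * t ≤ Bad.card + M := by
      have h1 : ∑ x ∈ X, t ≤ ∑ x ∈ X, ((Bad.filter (fun wx => wx.2 = x)).card + m x) :=
        Finset.sum_le_sum hBadfib
      rw [Finset.sum_const, smul_eq_mul, Finset.sum_add_distrib, ← hBadsum, ← hMdef] at h1
      exact h1
    -- the defective set
    set D1 : Finset (V × V) := Wa.image (fun w => (v, w)) with hD1def
    set D2 : Finset (V × V) := Wa.image (fun w => (w, v)) with hD2def
    set D4 : Finset (V × V) := Bad.image Prod.swap with hD4def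
    set Def : Finset (V × V) := D1 ∪ (D2 ∪ (Bad ∪ D4)) with hDefdef
    have hWaW : Wa ⊆ W := Finset.filter_subset _ _
    have hWsubNvi : W ⊆ Nvi := Finset.inter_subset_left
    have hXsubNvi : X ⊆ Nvi := Finset.sdiff_subset
    have hXnotW : ∀ x ∈ X, x ∉ W := by
      intro x hx hxW
      have := Finset.mem_sdiff.mp (hXdef ▸ hx)
      exact this.2 (Finset.mem_insert_of_mem hxW)
    have hv_not_X : v ∉ X := fun h => ((hXmem v).mp h).2.1 rfl
    -- memberships of Def elements
    have hD1mem : ∀ bc ∈ D1, bc.1 = v ∧ bc.2 ∈ Wa := by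
      intro bc hbc
      obtain ⟨w, hw, rfl⟩ := Finset.mem_image.mp hbc
      exact ⟨rfl, hw⟩
    have hD2mem : ∀ bc ∈ D2, bc.1 ∈ Wa ∧ bc.2 = v := by
      intro bc hbc
      obtain ⟨w, hw, rfl⟩ := Finset.mem_image.mp hbc
      exact ⟨hw, rfl⟩
    have hBadmem : ∀ bc ∈ Bad, bc.1 ∈ W ∧ bc.2 ∈ X ∧ P bc := by
      intro bc hbc
      have h1 := Finset.mem_filter.mp hbc
      have h2 := Finset.mem_product.mp h1.1
      exact ⟨h2.1, h2.2, h1.2⟩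
    have hD4mem : ∀ bc ∈ D4, bc.1 ∈ X ∧ bc.2 ∈ W ∧ P bc.swap := by
      intro bc hbc
      obtain ⟨wx, hwx, rfl⟩ := Finset.mem_image.mp hbc
      obtain ⟨h1, h2, h3⟩ := hBadmem wx hwx
      exact ⟨h2, h1, by simpa using h3⟩
    -- cardinality of Def
    have hDefcard : Def.card = Wa.card + (Wa.card + (Bad.card + Bad.card)) := by
      have hc1 : D1.card = Wa.card := Finset.card_image_of_injective _ (fun w w' h => by
        simpa using (Prod.mk.injEq v w v w').mp h)
      have hc2 : D2.card = Wa.card := Finset.card_image_of_injective _ (fun w w' h => by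
        simpa using (Prod.mk.injEq w v w' v).mp h)
      have hc4 : D4.card = Bad.card := Finset.card_image_of_injective _ Prod.swap_injective
      have hd34 : Disjoint Bad D4 := by
        rw [Finset.disjoint_left]
        intro bc h1 h2
        exact hXnotW bc.1 (hD4mem bc h2).1 (hBadmem bc h1).1
      have hd234 : Disjoint D2 (Bad ∪ D4) := by
        rw [Finset.disjoint_left]
        intro bc h1 h2
        have hbc2 : bc.2 = v := (hD2mem bc h1).2
        rcases Finset.mem_union.mp h2 with h3 | h3
        · exact hv_not_X (hbc2 ▸ (hBadmem bc h3).2.1)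
        · exact hv_not_W (hbc2 ▸ (hD4mem bc h3).2.1)
      have hd1rest : Disjoint D1 (D2 ∪ (Bad ∪ D4)) := by
        rw [Finset.disjoint_left]
        intro bc h1 h2
        have hbc1 : bc.1 = v := (hD1mem bc h1).1
        rcases Finset.mem_union.mp h2 with h3 | h3
        · exact hv_not_W (hbc1 ▸ hWaW (hD2mem bc h3).1)
        · rcases Finset.mem_union.mp h3 with h4 | h4
          · exact hv_not_W (hbc1 ▸ (hBadmem bc h4).1)
          · exact hv_not_X (hbc1 ▸ (hD4mem bc h4).1)
      rw [hDefdef, Finset.card_union_of_disjoint hd1rest,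
        Finset.card_union_of_disjoint hd234, Finset.card_union_of_disjoint hd34,
        hc1, hc2, hc4]
    -- Def ⊆ PR
    have hDefPR : Def ⊆ PR := by
      intro bc hbc
      simp only [hPRdef, Finset.mem_filter, Finset.mem_product]
      rcases Finset.mem_union.mp hbc with h1 | h1
      · obtain ⟨he, hw⟩ := hD1mem bc h1
        have hbW := hWaW hw
        obtain ⟨b, c⟩ := bc
        simp only at he ⊢
        subst he
        exact ⟨⟨hv_mem_Nvi, hWsubNvi hbW⟩, fun h => hv_not_W (h ▸ hbW)⟩
      rcases Finset.mem_union.mp h1 with h2 | h2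
      · obtain ⟨hw, he⟩ := hD2mem bc h2
        have hbW := hWaW hw
        obtain ⟨b, c⟩ := bc
        simp only at he ⊢
        subst he
        exact ⟨⟨hWsubNvi hbW, hv_mem_Nvi⟩, fun h => hv_not_W (h ▸ hbW)⟩
      rcases Finset.mem_union.mp h2 with h3 | h3
      · obtain ⟨hw, hx, -⟩ := hBadmem bc h3
        exact ⟨⟨hWsubNvi hw, hXsubNvi hx⟩, fun h => hXnotW bc.2 hx (h ▸ hw)⟩
      · obtain ⟨hx, hw, -⟩ := hD4mem bc h3
        exact ⟨⟨hXsubNvi hx, hWsubNvi hw⟩, fun h => hXnotW bc.1 hx (h.symm ▸ hw)⟩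
    -- defective fibers
    have hDeffib : ∀ bc ∈ Def, fib bc + 2 ≤ k := by
      intro bc hbc
      rcases Finset.mem_union.mp hbc with h1 | h1
      · obtain ⟨he, hw⟩ := hD1mem bc h1
        obtain ⟨b, c⟩ := bc
        simp only at he
        subst he
        have := Finset.mem_filter.mp hw
        exact hfib_vw c this.1 this.2
      rcases Finset.mem_union.mp h1 with h2 | h2
      · obtain ⟨hw, he⟩ := hD2mem bc h2
        obtain ⟨b, c⟩ := bc
        simp only at he
        subst he
        have := Finset.mem_filter.mp hw
        exact hfib_wv b this.1 this.2
      rcases Finset.mem_union.mp h2 with h3 | h3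
      · obtain ⟨hw, hx, hp⟩ := hBadmem bc h3
        exact hfib_wx bc.1 hw bc.2 hx hp
      · obtain ⟨hx, hw, hp⟩ := hD4mem bc h3
        have : P (bc.2, bc.1) := hp
        exact hfib_xw bc.2 hw bc.1 hx this
    -- PR cardinality
    have hPRcard : PR.card = k * (k - 1) := by
      have hdiag : ((Nvi ×ˢ Nvi).filter (fun bc => bc.1 = bc.2)).card = k := by
        have he : (Nvi ×ˢ Nvi).filter (fun bc => bc.1 = bc.2)
            = Nvi.image (fun b => (b, b)) := by
          ext ⟨b, c⟩
          simp only [Finset.mem_filter, Finset.mem_product, Finset.mem_image, Prod.mk.injEq]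
          constructor
          · rintro ⟨⟨h1, h2⟩, rfl⟩
            exact ⟨b, h1, rfl, rfl⟩
          · rintro ⟨b', hb', rfl, rfl⟩
            exact ⟨⟨hb', hb'⟩, rfl⟩
        rw [he, Finset.card_image_of_injective _ (fun b b' h => by
          simpa using ((Prod.mk.injEq b b b' b').mp h).1), hNvicard]
      have hsplit := Finset.card_filter_add_card_filter_not
        (s := Nvi ×ˢ Nvi) (p := fun bc => bc.1 = bc.2)
      have hprod : (Nvi ×ˢ Nvi).card = k * k := by
        rw [Finset.card_product, hNvicard]
      have hid : k * k = k * (k - 1) + k := by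
        obtain ⟨j, rfl⟩ : ∃ j, k = j + 1 := ⟨k - 1, by omega⟩
        simp only [Nat.add_sub_cancel]
        ring
      rw [hPRdef]
      linarith only [hdiag, hsplit, hprod, hid]
    -- main counting inequality at vi
    have hDefle : Def.card ≤ 2 * ε := by
      have hpt2 : ∀ bc ∈ PR, fib bc + (1 + (if bc ∈ Def then 1 else 0)) ≤ k := by
        intro bc hbc
        by_cases h : bc ∈ Def
        · simp only [h, if_true]
          have := hDeffib bc h
          omega
        · simp only [h, if_false]
          have hb : G.Adj vi bc.1 := by
            have := (Finset.mem_product.mp (Finset.mem_filter.mp hbc).1).1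
            rwa [hNvidef, mem_neighborFinset] at this
          have := hfib1 bc.1 bc.2 hb
          obtain ⟨b, c⟩ := bc
          simpa using this
      have hsum := Finset.sum_le_sum hpt2
      rw [Finset.sum_const, smul_eq_mul] at hsum
      have hite : ∑ bc ∈ PR, (if bc ∈ Def then 1 else 0) = Def.card := by
        rw [← Finset.card_filter, Finset.filter_mem_eq_inter,
          Finset.inter_eq_right.mpr hDefPR]
      have hlhs : ∑ bc ∈ PR, (fib bc + (1 + (if bc ∈ Def then 1 else 0)))
          = TV.card + (PR.card + Def.card) := by
        rw [Finset.sum_add_distrib, Finset.sum_add_distrib, Finset.sum_const, smul_eq_mul,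
          mul_one, ← hTVsum, hite]
      rw [hlhs] at hsum
      have hTvi := hTz vi
      rw [hPRcard] at hsum
      have hid2 : k * (k - 1) * k = k * (k - 1) ^ 2 + k * (k - 1) := by
        obtain ⟨j, rfl⟩ : ∃ j, k = j + 1 := ⟨k - 1, by omega⟩
        simp only [Nat.add_sub_cancel]
        ring
      linarith only [hsum, hTvi, hid2]
    -- final arithmetic
    obtain ⟨Q, hQ1, hQ2⟩ : ∃ Q, 2 * X.card ≤ Q ∧ Q ≤ Bad.card + M :=
      ⟨t * X.card, Nat.mul_le_mul_right _ (by omega), by rw [mul_comm] at hBadM; exact hBadM⟩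
    have e1 : Wa.card + Bad.card ≤ ε := by linarith only [hDefcard, hDefle]
    have e2 : 2 * X.card ≤ Bad.card + M := le_trans hQ1 hQ2
    have e3 : 2 * t + 2 * X.card ≤ 3 * ε := by linarith only [e1, hWa, e2, hB]
    have hk1 : k - 1 + 1 = k := by omega
    have e4 : 2 * ε ≤ X.card + t := by linarith only [hεk, hXcard, hk1]
    linarith only [e3, e4, hKEY]

  -- final conclusion from hKEY
  have hsub : (↑X : Set V) ⊆ (G.neighborSet vi
      ∩ (distTwoSet G v \ (G.neighborSet u ∪ distTwoSet G u ∪ G.neighborSet v'))) := by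
    intro x hx
    rw [Finset.mem_coe] at hx
    obtain ⟨h1, h2, h3⟩ := (hXmem x).mp hx
    have hnadj_vx : ¬ G.Adj v x := fun h => noC3 hg hvvi h1 h.symm
    have hd2 : G.dist v x = 2 := dist2_of hvvi h1 (Ne.symm h2) hnadj_vx
    refine ⟨h1, hd2, ?_⟩
    rintro ((h | h) | h)
    · exact hux x h h1.symm
    · exact h3 h
    · -- Adj v' x gives a 4-cycle v' v vi x
      exact noC4 hg hvv'.symm hvvi h1 (G.adj_symm h) (Ne.symm hvine) (Ne.symm h2)
  have hXS : k - 2 ≤ X.card := by omega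
  calc (k - 2 : ℕ) ≤ X.card := hXS
    _ = (↑X : Set V).ncard := (Set.ncard_coe_finset X).symm
    _ ≤ _ := Set.ncard_le_ncard hsub (Set.toFinite _)
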